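/- Let β < 0, s > 0, α, μ ∈ ℝ, and let ε₁, ε₂, ε₃ ∈ {1, −1} with ε₁ε₂ε₃ = 1. Set κ = ε₁·(α/(2|β|))·√(|β|/(6s)) − ε₂·μ/(6s), B₀ = −α/(2β) − ε₃·√(6s/|β|)·μ/(6s), B₁ = ε₃·√(6s/|β|)·κ, C₁ = 2κ, D₁ = i·ε·(α/(2|β|) − ε₃·(μ/(6s))·√(6s/|β|)) for ε ∈ {1,−1}, and v = −μ²/(6s) − 2s·(α/(2|β|)·√(|β|/(6s)) − ε₃·μ/(6s))² − α²/(4β). Then the complex-valued function u(ξ) = B₀ + B₁ tanh(C₁ ξ) + D₁ sech(C₁ ξ) satisfies u'' + (μ/s) u' + (β/(3s)) u³ + (α/(2s)) u² − (v/s) u = 0 for all real ξ with C₁ ξ in the domain of sech and tanh. -/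

import Mathlib

open Real Complex

set_option maxHeartbeats 4000000

lemma cbkdv_key_identity (Sh Ch X m q r s a e e1 e3 : ℂ)
    (hch : Ch^2 = Sh^2 + 1) (hqr : q*r = 1)
    (he : e^2 = 1) (he1 : e1^2 = 1) (he3 : e3^2 = 1)
    (hi : Complex.I^2 = -1)
    (har : a*r = 6*q*s)
    (hq2 : 6*s*q^2 = a) (hr2 : a*r^2 = 6*s) :
    6*s*(2*(e1*(q*X - e3*m)))^2*(-(Complex.I*e*(X - e3*r*m))*Ch^2
        + 2*(Complex.I*e*(X - e3*r*m))*Sh^2 - 2*(e1*e3*(X - e3*r*m))*Sh)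
      + 6*(6*s*m)*(2*(e1*(q*X - e3*m)))*((e1*e3*(X - e3*r*m))
        - (Complex.I*e*(X - e3*r*m))*Sh)*Ch
      + 2*(-a)*((X - e3*r*m)*Ch + (e1*e3*(X - e3*r*m))*Sh + Complex.I*e*(X - e3*r*m))^3
      + 3*(2*a*X)*Ch*((X - e3*r*m)*Ch + (e1*e3*(X - e3*r*m))*Sh + Complex.I*e*(X - e3*r*m))^2
      - 6*(-6*s*m^2 - 2*s*(e1*(q*X - e3*m))^2 + a*X^2)*Ch^2
        *((X - e3*r*m)*Ch + (e1*e3*(X - e3*r*m))*Sh + Complex.I*e*(X - e3*r*m)) = 0 := by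
  linear_combination (-36*m^3*r*s*e*e3*Complex.I + 12*m^3*r*s*e*e1^2*e3^3*Complex.I + 6*m^3*r^3*a*e*e3^3*Complex.I + 36*X*m^2*s*e*Complex.I + -12*X*m^2*s*e*e1^2*e3^2*Complex.I + -6*X*m^2*r^2*a*e*e3^2*Complex.I + -24*X*m^2*q*r*s*e*e1^2*e3^2*Complex.I + 24*X^2*m*q*s*e*e1^2*e3*Complex.I + 12*X^2*m*q^2*r*s*e*e1^2*e3*Complex.I + -12*X^3*q^2*s*e*e1^2*Complex.I + -36*Ch*m^3*r*s*e3 + -12*Ch*m^3*r*s*e1^2*e3^3 + 2*Ch*m^3*r^3*a*e3^3 + 36*Ch*X*m^2*s + 12*Ch*X*m^2*s*e1^2*e3^2 + 24*Ch*X*m^2*q*r*s*e1^2*e3^2 + -24*Ch*X^2*m*q*s*e1^2*e3 + -12*Ch*X^2*m*q^2*r*s*e1^2*e3 + -2*Ch*X^3*a + 12*Ch*X^3*q^2*s*e1^2 + -36*Sh*m^3*r*s*e1*e3^2 + -12*Sh*m^3*r*s*e1^3*e3^4 + 6*Sh*m^3*r^3*a*e1*e3^4 + 36*Sh*X*m^2*s*e1*e3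 + 12*Sh*X*m^2*s*e1^3*e3^3 + -6*Sh*X*m^2*r^2*a*e1*e3^3 + 24*Sh*X*m^2*q*r*s*e1^3*e3^3 + -24*Sh*X^2*m*q*s*e1^3*e3^2 + -12*Sh*X^2*m*q^2*r*s*e1^3*e3^2 + 12*Sh*X^3*q^2*s*e1^3*e3) * hch
  + (24*m^3*r*s*e*e3*Complex.I + -24*X*m^2*s*e*e1^2*e3^2*Complex.I + 12*X^2*m*q*s*e*e1^2*e3*Complex.I + -24*Ch*m^3*r*s*e3 + 72*Ch*X*m^2*s + -48*Ch*X*m^2*s*e1^2*e3^2 + -12*Ch*X^2*m*q*s*e1^2*e3 + 72*Sh*X*m^2*s*e1*e3 + -72*Sh*X*m^2*s*e1^3*e3^3 + 36*Sh*X^2*m*q*s*e1^3*e3^2 + 72*Sh*Ch*m^3*r*s*e*e1*Complex.I + -72*Sh*Ch*X*m^2*s*e*e1*e3*Complex.I + 72*Sh^2*m^3*r*s*e*e3*Complex.I + -144*Sh^2*X*m^2*s*e*Complex.I + 72*Sh^2*X*m^2*s*e*e1^2*e3^2*Complex.I + -36*Sh^2*X^2*m*q*s*e*e1^2*e3*Complex.I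 + 48*Sh^2*Ch*m^3*r*s*e3 + -72*Sh^2*Ch*X*m^2*s + 24*Sh^2*Ch*X*m^2*s*e1^2*e3^2 + -12*Sh^2*Ch*X^2*m*q*s*e1^2*e3 + 48*Sh^3*m^3*r*s*e1 + -72*Sh^3*X*m^2*s*e1*e3 + 24*Sh^3*X*m^2*s*e1^3*e3^3 + -12*Sh^3*X^2*m*q*s*e1^3*e3^2) * hqr
  + (2*m^3*r^3*a*e*e3^3*Complex.I^3 + -6*X*m^2*r^2*a*e*e3^2*Complex.I^3 + 6*X^2*m*r*a*e*e3*Complex.I^3 + -2*X^3*a*e*Complex.I^3 + 6*Ch*m^3*r^3*a*e3^3*Complex.I^2 + -12*Ch*X*m^2*r^2*a*e3^2*Complex.I^2 + 6*Ch*X^2*m*r*a*e3*Complex.I^2 + 6*Sh*m^3*r^3*a*e1*e3^4*Complex.I^2 + -18*Sh*X*m^2*r^2*a*e1*e3^3*Complex.I^2 + 18*Sh*X^2*m*r*a*e1*e3^2*Complex.I^2 + -6*Sh*X^3*a*e1*e3*Complex.I^2) * he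
  + (12*m^3*r*s*e*e3^3*Complex.I + -36*X*m^2*s*e*e3^2*Complex.I + 36*X^2*m*q*s*e*e3*Complex.I + -12*X^3*q^2*s*e*Complex.I + 60*Ch*m^3*r*s*e3^3 + -108*Ch*X*m^2*s*e3^2 + 36*Ch*X^2*m*q*s*e3 + 12*Ch*X^3*q^2*s + 36*Sh*m^3*r*s*e1*e3^4 + -108*Sh*X*m^2*s*e1*e3^3 + 108*Sh*X^2*m*q*s*e1*e3^2 + -36*Sh*X^3*q^2*s*e1*e3 + -36*Sh^2*m^3*r*s*e*e3^3*Complex.I + 6*Sh^2*m^3*r^3*a*e*e3^5*Complex.I + 108*Sh^2*X*m^2*s*e*e3^2*Complex.I + -18*Sh^2*X*m^2*r^2*a*e*e3^4*Complex.I + 18*Sh^2*X^2*m*r*a*e*e3^3*Complex.I + -108*Sh^2*X^2*m*q*s*e*e3*Complex.I + -6*Sh^2*X^3*a*e*e3^2*Complex.I + 36*Sh^2*X^3*q^2*s*e*Complex.I + -12*Sh^2*Ch*m^3*r*s*e3^3 + 6*Sh^2*Ch*m^3*r^3*a*e3^5 + 36*Sh^2*Ch*X*m^2*s*e3^2 +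 -12*Sh^2*Ch*X*m^2*r^2*a*e3^4 + 6*Sh^2*Ch*X^2*m*r*a*e3^3 + -36*Sh^2*Ch*X^2*m*q*s*e3 + 12*Sh^2*Ch*X^3*q^2*s + -12*Sh^3*m^3*r*s*e1*e3^4 + 2*Sh^3*m^3*r^3*a*e1*e3^6 + 36*Sh^3*X*m^2*s*e1*e3^3 + -6*Sh^3*X*m^2*r^2*a*e1*e3^5 + 6*Sh^3*X^2*m*r*a*e1*e3^4 + -36*Sh^3*X^2*m*q*s*e1*e3^2 + -2*Sh^3*X^3*a*e1*e3^3 + 12*Sh^3*X^3*q^2*s*e1*e3) * he1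
  + (12*m^3*r*s*e*e3*Complex.I + 6*m^3*r^3*a*e*e3*Complex.I + 2*m^3*r^3*a*e*e3*Complex.I^3 + -36*X*m^2*s*e*Complex.I + -6*X*m^2*r^2*a*e*Complex.I + -6*X*m^2*r^2*a*e*Complex.I^3 + 60*Ch*m^3*r*s*e3 + 2*Ch*m^3*r^3*a*e3 + 6*Ch*m^3*r^3*a*e3*Complex.I^2 + -108*Ch*X*m^2*s + -12*Ch*X*m^2*r^2*a*Complex.I^2 + 36*Sh*m^3*r*s*e1*e3^2 + 6*Sh*m^3*r^3*a*e1 + 6*Sh*m^3*r^3*a*e1*Complex.I^2 + 6*Sh*m^3*r^3*a*e1*e3^2 + 6*Sh*m^3*r^3*a*e1*e3^2*Complex.I^2 + -108*Sh*X*m^2*s*e1*e3 + -6*Sh*X*m^2*r^2*a*e1*e3 + -18*Sh*X*m^2*r^2*a*e1*e3*Complex.I^2 + 18*Sh*X^2*m*r*a*e1*Complex.I^2 + 108*Sh*X^2*m*q*s*e1 + -72*Sh*Ch*m^3*r*s*e*e1*Complex.I + 12*Sh*Ch*m^3*r^3*a*e*e1*Complex.I + 12*Sh*Ch*m^3*r^3*a*e*e1*e3^2*Complex.I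 + -24*Sh*Ch*X*m^2*r^2*a*e*e1*e3*Complex.I + 12*Sh*Ch*X^2*m*r*a*e*e1*Complex.I + -36*Sh^2*m^3*r*s*e*e3*Complex.I + 12*Sh^2*m^3*r^3*a*e*e3*Complex.I + 6*Sh^2*m^3*r^3*a*e*e3^3*Complex.I + 108*Sh^2*X*m^2*s*e*Complex.I + -24*Sh^2*X*m^2*r^2*a*e*Complex.I + -18*Sh^2*X*m^2*r^2*a*e*e3^2*Complex.I + 18*Sh^2*X^2*m*r*a*e*e3*Complex.I + -6*Sh^2*X^3*a*e*Complex.I + -12*Sh^2*Ch*m^3*r*s*e3 + 8*Sh^2*Ch*m^3*r^3*a*e3 + 6*Sh^2*Ch*m^3*r^3*a*e3^3 + 36*Sh^2*Ch*X*m^2*s + -12*Sh^2*Ch*X*m^2*r^2*a + -12*Sh^2*Ch*X*m^2*r^2*a*e3^2 + 6*Sh^2*Ch*X^2*m*r*a*e3 + -48*Sh^3*m^3*r*s*e1 + -12*Sh^3*m^3*r*s*e1*e3^2 + 8*Sh^3*m^3*r^3*a*e1 + 8*Sh^3*m^3*r^3*a*e1*e3^2 + 2*Sh^3*m^3*r^3*a*e1*e3^4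 + 36*Sh^3*X*m^2*s*e1*e3 + -12*Sh^3*X*m^2*r^2*a*e1*e3 + -6*Sh^3*X*m^2*r^2*a*e1*e3^3 + 6*Sh^3*X^2*m*r*a*e1 + 6*Sh^3*X^2*m*r*a*e1*e3^2 + -36*Sh^3*X^2*m*q*s*e1 + -2*Sh^3*X^3*a*e1*e3) * he3
  + (2*m^3*r^3*a*e*e3*Complex.I + -6*X*m^2*r^2*a*e*Complex.I + 6*X^2*m*r*a*e*e3*Complex.I + -2*X^3*a*e*Complex.I + 6*Ch*m^3*r^3*a*e3 + -12*Ch*X*m^2*r^2*a + 6*Ch*X^2*m*r*a*e3 + 6*Sh*m^3*r^3*a*e1 + -18*Sh*X*m^2*r^2*a*e1*e3 + 18*Sh*X^2*m*r*a*e1 + -6*Sh*X^3*a*e1*e3) * hi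
  + (4*m^3*r^2*e*e3*Complex.I + -6*X^2*m*e*e3*Complex.I + -4*Ch*m^3*r^2*e3 + 12*Ch*X*m^2*r + -6*Ch*X^2*m*e3 + 12*Sh*X*m^2*r*e1*e3 + -18*Sh*X^2*m*e1 + 12*Sh*Ch*m^3*r^2*e*e1*Complex.I + -24*Sh*Ch*X*m^2*r*e*e1*e3*Complex.I + 12*Sh*Ch*X^2*m*e*e1*Complex.I + 12*Sh^2*m^3*r^2*e*e3*Complex.I + -24*Sh^2*X*m^2*r*e*Complex.I + 18*Sh^2*X^2*m*e*e3*Complex.I + 8*Sh^2*Ch*m^3*r^2*e3 + -12*Sh^2*Ch*X*m^2*r + 6*Sh^2*Ch*X^2*m*e3 + 8*Sh^3*m^3*r^2*e1 + -12*Sh^3*X*m^2*r*e1*e3 + 6*Sh^3*X^2*m*e1) * har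
  + (-2*X^3*e*Complex.I + 2*Ch*X^3 + -6*Sh*X^3*e1*e3 + 6*Sh^2*X^3*e*Complex.I + 2*Sh^2*Ch*X^3 + 2*Sh^3*X^3*e1*e3) * hq2

lemma cbkdv_clear_denoms (s Ch A2 A1 W mu al be v : ℂ) (hs : s ≠ 0) (hCh : Ch ≠ 0)
    (hE : 6*s*A2 + 6*mu*A1*Ch + 2*be*W^3 + 3*al*Ch*W^2 - 6*v*Ch^2*W = 0) :
    A2/Ch^3 + mu/s * (A1/Ch^2) + be/(3*s) * (W/Ch)^3 + al/(2*s) * (W/Ch)^2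
      - v/s * (W/Ch) = 0 := by
  have hs1 : s * s⁻¹ = 1 := mul_inv_cancel₀ hs
  have hc1 : Ch * Ch⁻¹ = 1 := mul_inv_cancel₀ hCh
  linear_combination (s⁻¹ * (Ch^3)⁻¹/6) * hE + (-(A2 * (Ch^3)⁻¹)) * hs1
    + (-(mu*A1*s⁻¹*(Ch^2)⁻¹) - al*W^2*s⁻¹*(Ch^2)⁻¹/2 + v*W*s⁻¹*Ch⁻¹*(Ch*Ch⁻¹+1)) * hc1

/-- The hyperbolic ansatz `u(ξ) = B₀ + B₁ tanh(C₁ξ) + D₁ sech(C₁ξ)` with the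
coefficients of the first solution set satisfies the traveling-wave ODE
`u'' + (μ/s) u' + (β/(3s)) u³ + (α/(2s)) u² − (v/s) u = 0`. -/
theorem cbkdv_hyperbolic_ansatz_solution
    (α β μ s : ℝ) (hβ : β < 0) (hs : 0 < s)
    (ε ε₁ ε₂ ε₃ : ℝ)
    (hε : ε = 1 ∨ ε = -1) (hε₁ : ε₁ = 1 ∨ ε₁ = -1)
    (hε₂ : ε₂ = 1 ∨ ε₂ = -1) (hε₃ : ε₃ = 1 ∨ ε₃ = -1)
    (hconstraint : ε₁ * ε₂ * ε₃ = 1)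
    (κ B₀ B₁ C₁ v : ℝ) (D₁ : ℂ)
    (hκ : κ = ε₁ * (α / (2 * |β|)) * Real.sqrt (|β| / (6 * s)) - ε₂ * μ / (6 * s))
    (hB₀ : B₀ = -α / (2 * β) - ε₃ * Real.sqrt (6 * s / |β|) * μ / (6 * s))
    (hB₁ : B₁ = ε₃ * Real.sqrt (6 * s / |β|) * κ)
    (hC₁ : C₁ = 2 * κ)
    (hD₁ : D₁ = Complex.I * ε *
      (α / (2 * |β|) - ε₃ * (μ / (6 * s)) * Real.sqrt (6 * s / |β|)))
    (hv : v = -μ ^ 2 / (6 * s)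
      - 2 * s * (α / (2 * |β|) * Real.sqrt (|β| / (6 * s)) - ε₃ * μ / (6 * s)) ^ 2
      - α ^ 2 / (4 * β))
    (u : ℝ → ℂ)
    (hu : ∀ ξ : ℝ, u ξ = (B₀ : ℂ) + (B₁ : ℂ) * Complex.tanh (C₁ * ξ)
      + D₁ / Complex.cosh (C₁ * ξ)) :
    ∀ ξ : ℝ,
      deriv (deriv u) ξ + (μ / s : ℂ) * deriv u ξ + (β / (3 * s) : ℂ) * (u ξ) ^ 3
        + (α / (2 * s) : ℂ) * (u ξ) ^ 2 - (v / s : ℂ) * u ξ = 0 := by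
  -- notation
  have hsne : s ≠ 0 := ne_of_gt hs
  have ha : (0:ℝ) < |β| := abs_pos.mpr (ne_of_lt hβ)
  have hane : |β| ≠ 0 := ne_of_gt ha
  have hba : β = -|β| := by rw [abs_of_neg hβ]; ring
  set a : ℝ := |β| with ha_def
  set X : ℝ := α / (2 * a) with hX_def
  set m : ℝ := μ / (6 * s) with hm_def
  set q : ℝ := Real.sqrt (a / (6 * s)) with hq_def
  set r : ℝ := Real.sqrt (6 * s / a) with hr_def
  have hq0 : (0:ℝ) ≤ a / (6 * s) := by positivity
  have hr0 : (0:ℝ) ≤ 6 * s / a := by positivity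
  have hqsq : q ^ 2 = a / (6 * s) := Real.sq_sqrt hq0
  have hrsq : r ^ 2 = 6 * s / a := Real.sq_sqrt hr0
  have hqr : q * r = 1 := by
    rw [hq_def, hr_def, ← Real.sqrt_mul hq0]
    rw [show a / (6 * s) * (6 * s / a) = 1 by field_simp]
    exact Real.sqrt_one
  have hq2 : 6 * s * q ^ 2 = a := by rw [hqsq]; field_simp
  have hr2 : a * r ^ 2 = 6 * s := by rw [hrsq]; field_simp
  have har : a * r = 6 * q * s := by linear_combination (-r) * hq2 + (6 * q * s) * hqr
  have he1sq : ε₁ ^ 2 = 1 := by rcases hε₁ with h | h <;> rw [h] <;> norm_num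
  have he2sq : ε₂ ^ 2 = 1 := by rcases hε₂ with h | h <;> rw [h] <;> norm_num
  have he3sq : ε₃ ^ 2 = 1 := by rcases hε₃ with h | h <;> rw [h] <;> norm_num
  have hesq : ε ^ 2 = 1 := by rcases hε with h | h <;> rw [h] <;> norm_num
  have he2 : ε₂ = ε₁ * ε₃ := by
    linear_combination (ε₁ * ε₃) * hconstraint + (-(ε₂ * ε₃ ^ 2)) * he1sq + (-ε₂) * he3sq
  -- parameter identities over ℝ
  have hκR : κ = ε₁ * (q * X - ε₃ * m) := by
    rw [hκ, he2, hm_def]; ring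
  have hB₀R : B₀ = X - ε₃ * r * m := by
    rw [hB₀, hba, hX_def, hm_def]; field_simp
  have hB₁R : B₁ = ε₁ * ε₃ * (X - ε₃ * r * m) := by
    rw [hB₁, hκR]
    linear_combination (ε₃ * r * ε₁ * 0) * he3sq + (ε₁ * ε₃ * X) * hqr
  have hC₁R : C₁ = 2 * (ε₁ * (q * X - ε₃ * m)) := by rw [hC₁, hκR]
  have hμR : μ = 6 * s * m := by rw [hm_def]; field_simp
  have hαR : α = 2 * a * X := by rw [hX_def]; field_simp
  have hvR : v = -(6 * s) * m ^ 2 - 2 * s * (ε₁ * (q * X - ε₃ * m)) ^ 2 + a * X ^ 2 := by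
    have h1 : (ε₁ * (q * X - ε₃ * m)) ^ 2 = (q * X - ε₃ * m) ^ 2 := by
      rw [mul_pow, he1sq, one_mul]
    rw [hv, hba, hμR, hαR, h1]
    field_simp
    ring
  -- complex versions
  have hB₀C : (B₀ : ℂ) = (X : ℂ) - (ε₃ : ℂ) * (r : ℂ) * (m : ℂ) := by
    rw [hB₀R]; push_cast; ring
  have hB₁C : (B₁ : ℂ) = (ε₁ : ℂ) * (ε₃ : ℂ) * ((X : ℂ) - (ε₃ : ℂ) * (r : ℂ) * (m : ℂ)) := by
    rw [hB₁R]; push_cast; ring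
  have hD₁C : D₁ = Complex.I * (ε : ℂ) * ((X : ℂ) - (ε₃ : ℂ) * (r : ℂ) * (m : ℂ)) := by
    rw [hD₁, hX_def, hm_def, hr_def]; push_cast; ring
  have hC₁C : (C₁ : ℂ) = 2 * ((ε₁ : ℂ) * ((q : ℂ) * (X : ℂ) - (ε₃ : ℂ) * (m : ℂ))) := by
    rw [hC₁R]; push_cast; ring
  have hvC : (v : ℂ) = -(6 * (s : ℂ) * (m : ℂ) ^ 2)
      - 2 * (s : ℂ) * ((ε₁ : ℂ) * ((q : ℂ) * (X : ℂ) - (ε₃ : ℂ) * (m : ℂ))) ^ 2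
      + (a : ℂ) * (X : ℂ) ^ 2 := by
    rw [hvR]; push_cast; ring
  have hμC : (μ : ℂ) = 6 * (s : ℂ) * (m : ℂ) := by rw [hμR]; push_cast; ring
  have hαC : (α : ℂ) = 2 * (a : ℂ) * (X : ℂ) := by rw [hαR]; push_cast; ring
  have hβC : (β : ℂ) = -(a : ℂ) := by rw [hba]; push_cast; ring
  -- analysis
  have hne : ∀ x : ℝ, Complex.cosh ((C₁ : ℂ) * x) ≠ 0 := by
    intro x
    have hx : ((C₁ : ℂ) * x) = ((C₁ * x : ℝ) : ℂ) := by push_cast; ring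
    rw [hx, ← Complex.ofReal_cosh]
    exact_mod_cast ne_of_gt (Real.cosh_pos (x := C₁ * x))
  have hufun : u = fun x : ℝ => (B₀ : ℂ)
      + ((B₁ : ℂ) * Complex.sinh ((C₁ : ℂ) * x) + D₁) / Complex.cosh ((C₁ : ℂ) * x) := by
    funext x
    rw [hu x, Complex.tanh_eq_sinh_div_cosh, ← mul_div_assoc, add_assoc, ← add_div]
  have hlin : ∀ x : ℝ, HasDerivAt (fun y : ℝ => (C₁ : ℂ) * (y : ℂ)) (C₁ : ℂ) x := by
    intro x
    have h1 : HasDerivAt (fun z : ℂ => (C₁ : ℂ) * z) ((C₁ : ℂ) * 1) (x : ℂ) :=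
      (hasDerivAt_id (x : ℂ)).const_mul (C₁ : ℂ)
    simpa using h1.comp_ofReal
  have hsinh : ∀ x : ℝ, HasDerivAt (fun y : ℝ => Complex.sinh ((C₁ : ℂ) * y))
      ((C₁ : ℂ) * Complex.cosh ((C₁ : ℂ) * x)) x := by
    intro x
    have h1 := (Complex.hasDerivAt_sinh ((C₁ : ℂ) * x)).comp x (hlin x)
    exact h1.congr_deriv (mul_comm _ _)
  have hcosh : ∀ x : ℝ, HasDerivAt (fun y : ℝ => Complex.cosh ((C₁ : ℂ) * y))
      ((C₁ : ℂ) * Complex.sinh ((C₁ : ℂ) * x)) x := by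
    intro x
    have h1 := (Complex.hasDerivAt_cosh ((C₁ : ℂ) * x)).comp x (hlin x)
    exact h1.congr_deriv (mul_comm _ _)
  have hu1 : ∀ x : ℝ, HasDerivAt u
      ((C₁ : ℂ) * ((B₁ : ℂ) - D₁ * Complex.sinh ((C₁ : ℂ) * x))
        / (Complex.cosh ((C₁ : ℂ) * x)) ^ 2) x := by
    intro x
    rw [hufun]
    have hnum : HasDerivAt (fun y : ℝ => (B₁ : ℂ) * Complex.sinh ((C₁ : ℂ) * y) + D₁)
        ((B₁ : ℂ) * ((C₁ : ℂ) * Complex.cosh ((C₁ : ℂ) * x))) x :=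
      ((hsinh x).const_mul (B₁ : ℂ)).add_const D₁
    have hq1 := hnum.div (hcosh x) (hne x)
    have h2 := hq1.const_add (B₀ : ℂ)
    refine h2.congr_deriv (Eq.symm ?_)
    have hid : (Complex.cosh ((C₁ : ℂ) * x)) ^ 2 = (Complex.sinh ((C₁ : ℂ) * x)) ^ 2 + 1 := by
      linear_combination Complex.cosh_sq_sub_sinh_sq ((C₁ : ℂ) * x)
    rw [div_eq_div_iff (pow_ne_zero 2 (hne x)) (pow_ne_zero 2 (hne x))]
    linear_combination (-((B₁ : ℂ) * (C₁ : ℂ) * (Complex.cosh ((C₁ : ℂ) * x)) ^ 2)) * hid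
  have hderiv1 : deriv u = fun x : ℝ =>
      (C₁ : ℂ) * ((B₁ : ℂ) - D₁ * Complex.sinh ((C₁ : ℂ) * x))
        / (Complex.cosh ((C₁ : ℂ) * x)) ^ 2 := by
    funext x; exact (hu1 x).deriv
  have hu2 : ∀ x : ℝ, HasDerivAt (deriv u)
      ((C₁ : ℂ) ^ 2 * (-D₁ * (Complex.cosh ((C₁ : ℂ) * x)) ^ 2
          + 2 * D₁ * (Complex.sinh ((C₁ : ℂ) * x)) ^ 2
          - 2 * (B₁ : ℂ) * Complex.sinh ((C₁ : ℂ) * x))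
        / (Complex.cosh ((C₁ : ℂ) * x)) ^ 3) x := by
    intro x
    rw [hderiv1]
    have hnum : HasDerivAt (fun y : ℝ => (C₁ : ℂ) * ((B₁ : ℂ) - D₁ * Complex.sinh ((C₁ : ℂ) * y)))
        ((C₁ : ℂ) * (-(D₁ * ((C₁ : ℂ) * Complex.cosh ((C₁ : ℂ) * x))))) x := by
      exact ((((hsinh x).const_mul D₁).const_sub (B₁ : ℂ))).const_mul (C₁ : ℂ)
    have hden : HasDerivAt (fun y : ℝ => (Complex.cosh ((C₁ : ℂ) * y)) ^ 2)
        (2 * (C₁ : ℂ) * Complex.sinh ((C₁ : ℂ) * x) * Complex.cosh ((C₁ : ℂ) * x)) x := by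
      have h : HasDerivAt (fun y : ℝ => Complex.cosh ((C₁ : ℂ) * y) * Complex.cosh ((C₁ : ℂ) * y)) _ x :=
        (hcosh x).mul (hcosh x)
      have heq : (fun y : ℝ => Complex.cosh ((C₁ : ℂ) * y) * Complex.cosh ((C₁ : ℂ) * y))
          = fun y : ℝ => (Complex.cosh ((C₁ : ℂ) * y)) ^ 2 := by
        funext y; ring
      rw [heq] at h
      convert h using 1
      ring
    have hq1 := hnum.div hden (pow_ne_zero 2 (hne x))
    refine hq1.congr_deriv (Eq.symm ?_)
    field_simp [hne x]
    ring
  have hderiv2 : deriv (deriv u) = fun x : ℝ =>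
      (C₁ : ℂ) ^ 2 * (-D₁ * (Complex.cosh ((C₁ : ℂ) * x)) ^ 2
          + 2 * D₁ * (Complex.sinh ((C₁ : ℂ) * x)) ^ 2
          - 2 * (B₁ : ℂ) * Complex.sinh ((C₁ : ℂ) * x))
        / (Complex.cosh ((C₁ : ℂ) * x)) ^ 3 := by
    funext x; exact (hu2 x).deriv
  intro ξ
  set Sh : ℂ := Complex.sinh ((C₁ : ℂ) * ξ) with hSh_def
  set Ch : ℂ := Complex.cosh ((C₁ : ℂ) * ξ) with hCh_def
  have hChne : Ch ≠ 0 := hne ξ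
  have hch : Ch ^ 2 = Sh ^ 2 + 1 := by
    rw [hSh_def, hCh_def]
    linear_combination Complex.cosh_sq_sub_sinh_sq ((C₁ : ℂ) * ξ)
  have hqrC : (q : ℂ) * (r : ℂ) = 1 := by exact_mod_cast congrArg (Complex.ofReal) hqr
  have heC : (ε : ℂ) ^ 2 = 1 := by exact_mod_cast congrArg (Complex.ofReal) hesq
  have he1C : (ε₁ : ℂ) ^ 2 = 1 := by exact_mod_cast congrArg (Complex.ofReal) he1sq
  have he3C : (ε₃ : ℂ) ^ 2 = 1 := by exact_mod_cast congrArg (Complex.ofReal) he3sq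
  have hq2C : 6 * (s : ℂ) * (q : ℂ) ^ 2 = (a : ℂ) := by
    exact_mod_cast congrArg (Complex.ofReal) hq2
  have hr2C : (a : ℂ) * (r : ℂ) ^ 2 = 6 * (s : ℂ) := by
    exact_mod_cast congrArg (Complex.ofReal) hr2
  have harC : (a : ℂ) * (r : ℂ) = 6 * (q : ℂ) * (s : ℂ) := by
    exact_mod_cast congrArg (Complex.ofReal) har
  have key := cbkdv_key_identity Sh Ch (X : ℂ) (m : ℂ) (q : ℂ) (r : ℂ) (s : ℂ) (a : ℂ)
    (ε : ℂ) (ε₁ : ℂ) (ε₃ : ℂ) hch hqrC heC he1C he3C Complex.I_sq harC hq2C hr2C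
  have hsC : (s : ℂ) ≠ 0 := by exact_mod_cast hsne
  rw [hderiv2, hderiv1, hufun]
  simp only [hB₀C]
  rw [← hSh_def, ← hCh_def, hB₁C, hD₁C, hC₁C, hvC, hμC, hαC, hβC]
  have hU : ((X : ℂ) - (ε₃ : ℂ) * (r : ℂ) * (m : ℂ))
        + (((ε₁ : ℂ) * (ε₃ : ℂ) * ((X : ℂ) - (ε₃ : ℂ) * (r : ℂ) * (m : ℂ))) * Sh
          + Complex.I * (ε : ℂ) * ((X : ℂ) - (ε₃ : ℂ) * (r : ℂ) * (m : ℂ))) / Ch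
      = (((X : ℂ) - (ε₃ : ℂ) * (r : ℂ) * (m : ℂ)) * Ch
          + (((ε₁ : ℂ) * (ε₃ : ℂ) * ((X : ℂ) - (ε₃ : ℂ) * (r : ℂ) * (m : ℂ))) * Sh
          + Complex.I * (ε : ℂ) * ((X : ℂ) - (ε₃ : ℂ) * (r : ℂ) * (m : ℂ)))) / Ch := by
    conv_rhs => rw [add_div, mul_div_cancel_right₀ _ hChne]
  rw [hU]
  have H := cbkdv_clear_denoms (s : ℂ) Ch
    ((2 * ((ε₁ : ℂ) * ((q : ℂ) * (X : ℂ) - (ε₃ : ℂ) * (m : ℂ)))) ^ 2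
      * (-(Complex.I * (ε : ℂ) * ((X : ℂ) - (ε₃ : ℂ) * (r : ℂ) * (m : ℂ))) * Ch ^ 2
        + 2 * (Complex.I * (ε : ℂ) * ((X : ℂ) - (ε₃ : ℂ) * (r : ℂ) * (m : ℂ))) * Sh ^ 2
        - 2 * ((ε₁ : ℂ) * (ε₃ : ℂ) * ((X : ℂ) - (ε₃ : ℂ) * (r : ℂ) * (m : ℂ))) * Sh))
    ((2 * ((ε₁ : ℂ) * ((q : ℂ) * (X : ℂ) - (ε₃ : ℂ) * (m : ℂ))))
      * (((ε₁ : ℂ) * (ε₃ : ℂ) * ((X : ℂ) - (ε₃ : ℂ) * (r : ℂ) * (m : ℂ)))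
        - Complex.I * (ε : ℂ) * ((X : ℂ) - (ε₃ : ℂ) * (r : ℂ) * (m : ℂ)) * Sh))
    (((X : ℂ) - (ε₃ : ℂ) * (r : ℂ) * (m : ℂ)) * Ch
      + ((ε₁ : ℂ) * (ε₃ : ℂ) * ((X : ℂ) - (ε₃ : ℂ) * (r : ℂ) * (m : ℂ))) * Sh
      + Complex.I * (ε : ℂ) * ((X : ℂ) - (ε₃ : ℂ) * (r : ℂ) * (m : ℂ)))
    (6 * (s : ℂ) * (m : ℂ)) (2 * (a : ℂ) * (X : ℂ)) (-(a : ℂ))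
    (-(6 * (s : ℂ) * (m : ℂ) ^ 2) - 2 * (s : ℂ) * ((ε₁ : ℂ) * ((q : ℂ) * (X : ℂ)
      - (ε₃ : ℂ) * (m : ℂ))) ^ 2 + (a : ℂ) * (X : ℂ) ^ 2)
    hsC hChne (by linear_combination key)
  linear_combination H
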